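/- arXiv:1102.3061 — 2 statements merged into one kernel-verified Lean document; each statement's English description precedes it below -/
import Mathlib

section
/- Let U : ℝ → ℝ be continuously differentiable, let D > 0, and let y_min ∈ ℝ be the unique global minimizer of U, i.e. U(y_min) < U(y) for every y ≠ y_min. If y : ℝ → ℝ is twice continuously differentiable on [0,1], satisfies the stationary equation 0 = −U′(y(x)) + D·y″(x) for every x ∈ [0,1], and satisfies the boundary conditions y(0) = y(1) = y_min, then y(x) = y_min for every x ∈ [0,1]. In other words, the uniform solution y ≡ y_min is the unique stationary solution. -/
open Set

/-- **Theorem 1 (threshold saturation for the phenomenological model).**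
If `U` is continuously differentiable, `D > 0`, `y_min` is the unique global
minimizer of `U`, and `y` is a twice continuously differentiable solution on
`[0,1]` of the stationary equation `0 = -U'(y(x)) + D * y''(x)` with boundary
conditions `y 0 = y_min` and `y 1 = y_min`, then `y ≡ y_min` on `[0,1]`. -/
theorem stationary_solution_is_uniform
    (U : ℝ → ℝ) (hU : ContDiff ℝ 1 U)
    (D : ℝ) (hD : 0 < D)
    (y_min : ℝ) (hmin : ∀ z : ℝ, z ≠ y_min → U y_min < U z)
    (y : ℝ → ℝ) (hy : ContDiffOn ℝ 2 y (Set.Icc 0 1))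
    (hstat : ∀ x ∈ Set.Icc (0 : ℝ) 1,
      (0 : ℝ) = -(deriv U (y x)) + D * deriv (deriv y) x)
    (hb0 : y 0 = y_min) (hb1 : y 1 = y_min) :
    ∀ x ∈ Set.Icc (0 : ℝ) 1, y x = y_min := by
  by_contra hcon
  push_neg at hcon
  obtain ⟨x₀, hx₀I, hx₀⟩ := hcon
  -- continuity of y on [0,1]
  have hycont : ContinuousOn y (Icc 0 1) := hy.continuousOn
  -- C² on the open interval
  have hyIoo : ContDiffOn ℝ 2 y (Ioo (0:ℝ) 1) := hy.mono Ioo_subset_Icc_self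
  have h2 : (2 : WithTop ℕ∞) = 1 + 1 := by norm_num
  have hsplit := (contDiffOn_succ_iff_deriv_of_isOpen (f := y) (n := 1) isOpen_Ioo).1
    (h2 ▸ hyIoo)
  have hydiff : DifferentiableOn ℝ y (Ioo (0:ℝ) 1) := hsplit.1
  have hy'diff : DifferentiableOn ℝ (deriv y) (Ioo (0:ℝ) 1) :=
    hsplit.2.2.differentiableOn one_ne_zero
  have hUdiff : Differentiable ℝ U := hU.differentiable one_ne_zero
  -- energy function
  set E : ℝ → ℝ := fun x => D / 2 * (deriv y x) ^ 2 - U (y x) with hE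
  have hEderiv : ∀ x ∈ Ioo (0:ℝ) 1, HasDerivAt E 0 x := by
    intro x hx
    have hnx : Ioo (0:ℝ) 1 ∈ nhds x := Ioo_mem_nhds hx.1 hx.2
    have hyx : HasDerivAt y (deriv y x) x :=
      (hydiff.differentiableAt hnx).hasDerivAt
    have hy'x : HasDerivAt (deriv y) (deriv (deriv y) x) x :=
      (hy'diff.differentiableAt hnx).hasDerivAt
    have hUx : HasDerivAt U (deriv U (y x)) (y x) := (hUdiff (y x)).hasDerivAt
    have h1 : HasDerivAt (fun t => D / 2 * (deriv y t) ^ 2)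
        (D / 2 * (2 * deriv y x * deriv (deriv y) x)) x := by
      have := ((hy'x.fun_pow 2).const_mul (D / 2))
      refine this.congr_deriv ?_
      ring
    have h2' : HasDerivAt (fun t => U (y t)) (deriv U (y x) * deriv y x) x :=
      hUx.comp x hyx
    have := h1.sub h2'
    have hkey : deriv U (y x) = D * deriv (deriv y) x := by
      have := hstat x (Ioo_subset_Icc_self hx)
      linarith
    have heq : D / 2 * (2 * deriv y x * deriv (deriv y) x) -
        deriv U (y x) * deriv y x = 0 := by
      rw [hkey]; ring
    rw [heq] at this
    exact this
  -- E is constant on Ioo 0 1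
  have hEconst : ∀ a ∈ Ioo (0:ℝ) 1, ∀ b ∈ Ioo (0:ℝ) 1, E a = E b := by
    have key : ∀ a ∈ Ioo (0:ℝ) 1, ∀ b ∈ Ioo (0:ℝ) 1, a ≤ b → E b = E a := by
      intro a ha b hb hab
      have hsub : Icc a b ⊆ Ioo (0:ℝ) 1 := fun t ht =>
        ⟨lt_of_lt_of_le ha.1 ht.1, lt_of_le_of_lt ht.2 hb.2⟩
      refine constant_of_derivWithin_zero (f := E) (a := a) (b := b) ?_ ?_ b
        (right_mem_Icc.2 hab)
      · intro t ht
        exact ((hEderiv t (hsub ht)).differentiableAt.differentiableWithinAt)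
      · intro t ht
        have htI : t ∈ Ioo (0:ℝ) 1 := hsub ⟨ht.1, le_of_lt ht.2⟩
        have hd := (hEderiv t htI).deriv
        have : DifferentiableAt ℝ E t := (hEderiv t htI).differentiableAt
        rw [this.derivWithin (uniqueDiffOn_Icc (lt_of_le_of_lt ht.1 ht.2) t
          ⟨ht.1, le_of_lt ht.2⟩), hd]
    intro a ha b hb
    rcases le_total a b with h | h
    · exact (key a ha b hb h).symm
    · exact key b hb a ha h
  -- maximum point of (y - y_min)^2
  set φ : ℝ → ℝ := fun x => (y x - y_min) ^ 2 with hφ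
  have hφcont : ContinuousOn φ (Icc 0 1) := by
    exact ((hycont.sub continuousOn_const).pow 2)
  obtain ⟨c, hcI, hcmax⟩ := (isCompact_Icc (a := (0:ℝ)) (b := 1)).exists_isMaxOn
    (nonempty_Icc.2 zero_le_one) hφcont
  have hφx₀ : 0 < φ x₀ := by
    have : y x₀ - y_min ≠ 0 := sub_ne_zero.2 hx₀
    positivity
  have hφc : 0 < φ c := lt_of_lt_of_le hφx₀ (hcmax hx₀I)
  have hyc : y c ≠ y_min := by
    intro h
    rw [hφ] at hφc
    simp [h] at hφc
  have hc0 : c ≠ 0 := fun h => hyc (h ▸ hb0)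
  have hc1 : c ≠ 1 := fun h => hyc (h ▸ hb1)
  have hcIoo : c ∈ Ioo (0:ℝ) 1 :=
    ⟨lt_of_le_of_ne hcI.1 (Ne.symm hc0), lt_of_le_of_ne hcI.2 hc1⟩
  -- deriv y c = 0
  have hnc : Ioo (0:ℝ) 1 ∈ nhds c := Ioo_mem_nhds hcIoo.1 hcIoo.2
  have hyac : HasDerivAt y (deriv y c) c := (hydiff.differentiableAt hnc).hasDerivAt
  have hlocmax : IsLocalMax φ c := by
    have : Icc (0:ℝ) 1 ∈ nhds c := Icc_mem_nhds hcIoo.1 hcIoo.2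
    exact Filter.eventually_iff_exists_mem.2 ⟨Icc 0 1, this, fun t ht => hcmax ht⟩
  have hφd : HasDerivAt φ (2 * (y c - y_min) * deriv y c) c := by
    have := (hyac.sub_const y_min).fun_pow 2
    refine this.congr_deriv ?_
    ring
  have hφderiv0 : deriv φ c = 0 := hlocmax.deriv_eq_zero
  have hdy_c : deriv y c = 0 := by
    have := hφd.deriv
    rw [hφderiv0] at this
    have h2ne : (2 : ℝ) * (y c - y_min) ≠ 0 := by
      have : y c - y_min ≠ 0 := sub_ne_zero.2 hyc
      simp [this]
    rw [eq_comm, mul_eq_zero] at this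
    rcases this with h | h
    · exact absurd (by linarith : y c - y_min = 0) (sub_ne_zero.2 hyc)
    · exact h
  -- value of the constant
  have hEc : E c = -U (y c) := by
    rw [hE]
    simp [hdy_c]
  -- E t = E c on Ioo, hence -U (y t) ≤ E c on Ioo
  have hle : ∀ t ∈ Ioo (0:ℝ) 1, -U (y t) ≤ E c := by
    intro t ht
    have := hEconst t ht c hcIoo
    have hnn : 0 ≤ D / 2 * (deriv y t) ^ 2 := by positivity
    rw [hE] at this ⊢
    nlinarith [this]
  -- pass to the limit at 0 : -U (y 0) ≤ E c
  have hcontg : ContinuousOn (fun t => -U (y t)) (Icc 0 1) :=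
    (hU.continuous.comp_continuousOn hycont).neg
  have h0cl : (0:ℝ) ∈ closure (Ioo (0:ℝ) 1) := by
    rw [closure_Ioo (by norm_num : (0:ℝ) ≠ 1)]
    exact ⟨le_refl 0, zero_le_one⟩
  have hne : (nhdsWithin (0:ℝ) (Ioo 0 1)).NeBot := mem_closure_iff_nhdsWithin_neBot.1 h0cl
  have htend : Filter.Tendsto (fun t => -U (y t)) (nhdsWithin 0 (Ioo 0 1))
      (nhds (-U (y 0))) := by
    have := (hcontg 0 (left_mem_Icc.2 zero_le_one))
    exact this.mono_left (nhdsWithin_mono 0 Ioo_subset_Icc_self)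
  have hlim : -U (y 0) ≤ E c := by
    refine le_of_tendsto htend ?_
    filter_upwards [self_mem_nhdsWithin] with t ht
    exact hle t ht
  -- contradiction
  rw [hb0, hEc] at hlim
  have : U y_min < U (y c) := hmin (y c) hyc
  linarith
end

section
/- Let U : ℝ → ℝ be continuously differentiable, let D > 0, let y_min ∈ ℝ, and let y : ℝ → ℝ be twice continuously differentiable on [0,1] satisfying 0 = −U′(y(x)) + D·y″(x) for every x ∈ [0,1] and y(0) = y_min. If x* ∈ (0,1) is a point at which y attains an extremum over [0,1] (so that y′(x*) = 0), then U(y(x*)) ≤ U(y_min). -/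
open Set Filter

/-- **Key step in the proof of Theorem 1.**
If `U` is continuously differentiable, `D > 0`, and `y` is a twice
continuously differentiable solution on `[0,1]` of the stationary equation
`0 = -U'(y(x)) + D * y''(x)` with `y 0 = y_min`, then at any interior point
`x* ∈ (0,1)` at which `y` attains an extremum over `[0,1]` (so that
`y'(x*) = 0`), the potential satisfies `U (y x*) ≤ U y_min`. -/
theorem potential_at_interior_extremum_le
    (U : ℝ → ℝ) (hU : ContDiff ℝ 1 U)
    (D : ℝ) (hD : 0 < D)
    (y_min : ℝ)
    (y : ℝ → ℝ) (hy : ContDiffOn ℝ 2 y (Set.Icc 0 1))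
    (hstat : ∀ x ∈ Set.Icc (0 : ℝ) 1,
      (0 : ℝ) = -(deriv U (y x)) + D * deriv (deriv y) x)
    (hb0 : y 0 = y_min)
    (xstar : ℝ) (hx : xstar ∈ Set.Ioo (0 : ℝ) 1)
    (hext : IsMaxOn y (Set.Icc 0 1) xstar ∨ IsMinOn y (Set.Icc 0 1) xstar) :
    U (y xstar) ≤ U y_min := by
  set s : Set ℝ := Set.Icc 0 1 with hsdef
  have hs : UniqueDiffOn ℝ s := uniqueDiffOn_Icc (by norm_num)
  set y1 := derivWithin y s with hy1def
  have hy1 : ContDiffOn ℝ 1 y1 s := hy.derivWithin hs (by norm_num)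
  have hydiff : DifferentiableOn ℝ y s := hy.differentiableOn (by norm_num)
  have hy1diff : DifferentiableOn ℝ y1 s := hy1.differentiableOn (by norm_num)
  set E : ℝ → ℝ := fun x => D / 2 * (y1 x) ^ 2 - U (y x) with hEdef
  have hmem : ∀ x ∈ Set.Ioo (0:ℝ) 1, s ∈ nhds x := fun x hx => Icc_mem_nhds hx.1 hx.2
  have hy1eq : ∀ x ∈ Set.Ioo (0:ℝ) 1, y1 x = deriv y x := fun x hx =>
    derivWithin_of_mem_nhds (hmem x hx)
  -- E has derivative 0 at interior points
  have hE0 : ∀ x ∈ Set.Ioo (0:ℝ) 1, HasDerivAt E 0 x := by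
    intro x hxI
    have hxs : x ∈ s := Ioo_subset_Icc_self hxI
    have hdy : HasDerivAt y (y1 x) x :=
      ((hydiff x hxs).hasDerivWithinAt).hasDerivAt (hmem x hxI)
    have hdy1 : HasDerivAt y1 (derivWithin y1 s x) x :=
      ((hy1diff x hxs).hasDerivWithinAt).hasDerivAt (hmem x hxI)
    have hdU : HasDerivAt U (deriv U (y x)) (y x) :=
      (hU.differentiable one_ne_zero (y x)).hasDerivAt
    have heq : deriv y =ᶠ[nhds x] y1 := by
      filter_upwards [Ioo_mem_nhds hxI.1 hxI.2] with z hz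
      exact (hy1eq z hz).symm
    have h2 : deriv (deriv y) x = derivWithin y1 s x := by
      rw [heq.deriv_eq, derivWithin_of_mem_nhds (hmem x hxI)]
    have hU' : deriv U (y x) = D * derivWithin y1 s x := by
      have := hstat x hxs
      rw [h2] at this
      linarith
    have hE : HasDerivAt E
        (D / 2 * (2 * y1 x ^ 1 * derivWithin y1 s x) - deriv U (y x) * y1 x) x :=
      ((hdy1.pow 2).const_mul (D / 2)).sub (hdU.comp x hdy)
    have hval : D / 2 * (2 * y1 x ^ 1 * derivWithin y1 s x) - deriv U (y x) * y1 x = 0 := by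
      rw [hU']; ring
    rwa [hval] at hE
  -- E is continuous on s
  have hEcont : ContinuousOn E s := by
    apply ContinuousOn.sub
    · exact (continuousOn_const.mul ((hy1.continuousOn).pow 2))
    · exact hU.continuous.comp_continuousOn hy.continuousOn
  -- E is constant, equal to E xstar, on (0, xstar]
  have hconst : ∀ a ∈ Set.Ioo (0:ℝ) xstar, E a = E xstar := by
    intro a ha
    have hsub : Set.Icc a xstar ⊆ Set.Ioo (0:ℝ) 1 := fun z hz =>
      ⟨lt_of_lt_of_le ha.1 hz.1, lt_of_le_of_lt hz.2 hx.2⟩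
    have := constant_of_has_deriv_right_zero
      (f := E) (a := a) (b := xstar)
      (fun z hz => ((hE0 z (hsub hz)).differentiableAt).continuousAt.continuousWithinAt)
      (fun z hz => ((hE0 z (hsub (Ico_subset_Icc_self hz))).hasDerivWithinAt))
      xstar (right_mem_Icc.2 ha.2.le)
    exact this.symm
  -- pass to the limit a → 0⁺ using continuity of E at 0
  have h0s : (0:ℝ) ∈ s := by constructor <;> norm_num
  have hxs0 : (0:ℝ) < xstar := hx.1
  have hne : (nhdsWithin 0 (Set.Ioo (0:ℝ) xstar)).NeBot := by
    apply mem_closure_iff_nhdsWithin_neBot.mp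
    rw [closure_Ioo (ne_of_lt hxs0)]
    exact ⟨le_rfl, hxs0.le⟩
  have hlim : Tendsto E (nhdsWithin 0 (Set.Ioo (0:ℝ) xstar)) (nhds (E 0)) := by
    refine (hEcont 0 h0s).mono_left (nhdsWithin_mono _ ?_)
    intro z hz
    exact ⟨hz.1.le, hz.2.le.trans hx.2.le⟩
  have hlim2 : Tendsto E (nhdsWithin 0 (Set.Ioo (0:ℝ) xstar)) (nhds (E xstar)) := by
    refine Tendsto.congr' ?_ tendsto_const_nhds
    filter_upwards [self_mem_nhdsWithin] with a ha
    exact (hconst a ha).symm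
  have hE0x : E 0 = E xstar := tendsto_nhds_unique hlim hlim2
  -- y1 xstar = 0 at the interior extremum
  have hd0 : deriv y xstar = 0 := by
    cases hext with
    | inl h => exact (h.isLocalMax (hmem xstar hx)).deriv_eq_zero
    | inr h => exact (h.isLocalMin (hmem xstar hx)).deriv_eq_zero
  have hy1star : y1 xstar = 0 := (hy1eq xstar hx).trans hd0
  -- conclude
  have hEx : E xstar = -U (y xstar) := by
    rw [hEdef]; simp [hy1star]
  have hE00 : E 0 = D / 2 * (y1 0) ^ 2 - U y_min := by
    rw [hEdef]; simp [hb0]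
  have hsq : 0 ≤ (y1 0) ^ 2 := sq_nonneg _
  rw [hEx, hE00] at hE0x
  nlinarith
end
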